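/- arXiv:1404.6026 — 2 statements merged into one kernel-verified Lean document; each statement's English description precedes it below -/
import Mathlib

section
/- Let h : ℝⁿ → ℝ be continuously differentiable with gradient L-Lipschitz on the ball B(τ), let σ : ℝⁿ → (-∞,+∞] be proper lower semicontinuous with finite infimum, and fix t > L. If u⁺ minimizes x ↦ σ(x) + ⟨x - u, ∇h(u)⟩ + (t/2)‖x - u‖² and both u and u⁺ lie in B(τ), then h(u⁺) + σ(u⁺) ≤ h(u) + σ(u) - ((t - L)/2)‖u⁺ - u‖². -/
open Real Set Metric RealInnerProductSpace
set_option maxHeartbeats 1000000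

-- descent lemma
theorem descent {n : ℕ} (h : EuclideanSpace ℝ (Fin n) → ℝ) (L τ : ℝ)
    (hsmooth : ContDiff ℝ 1 h)
    (hlip : ∀ u ∈ Metric.closedBall (0 : EuclideanSpace ℝ (Fin n)) τ,
      ∀ v ∈ Metric.closedBall (0 : EuclideanSpace ℝ (Fin n)) τ,
        ‖gradient h u - gradient h v‖ ≤ L * ‖u - v‖)
    (u uplus : EuclideanSpace ℝ (Fin n))
    (hu : u ∈ Metric.closedBall (0 : EuclideanSpace ℝ (Fin n)) τ)
    (huplus : uplus ∈ Metric.closedBall (0 : EuclideanSpace ℝ (Fin n)) τ) :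
    h uplus ≤ h u + ⟪gradient h u, uplus - u⟫ + L / 2 * ‖uplus - u‖ ^ 2 := by
  set d := uplus - u with hd
  have hdiff : Differentiable ℝ h := hsmooth.differentiable one_ne_zero
  -- the segment stays in the ball
  have hseg : ∀ s ∈ Set.Icc (0:ℝ) 1, u + s • d ∈ Metric.closedBall (0 : EuclideanSpace ℝ (Fin n)) τ := by
    intro s hs
    have := (convex_closedBall (0 : EuclideanSpace ℝ (Fin n)) τ)
    have h2 := this hu huplus (by linarith [hs.1, hs.2] : (0:ℝ) ≤ 1 - s) hs.1 (by ring)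
    convert h2 using 1
    simp [hd]
    module
  -- derivative of φ s = h (u + s • d)
  have hphi : ∀ s : ℝ, HasDerivAt (fun s : ℝ => h (u + s • d))
      (⟪gradient h (u + s • d), d⟫) s := by
    intro s
    have hline : HasDerivAt (fun s : ℝ => u + s • d) d s := by
      simpa using ((hasDerivAt_id s).smul_const d).const_add u
    have := ((hdiff (u + s • d)).hasFDerivAt).comp_hasDerivAt s hline
    rw [show ⟪gradient h (u + s • d), d⟫ = fderiv ℝ h (u + s • d) d from
      InnerProductSpace.toDual_symm_apply]
    exact this
  -- continuity of the gradient
  have hgc : Continuous (fun x => gradient h x) := by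
    have := hsmooth.continuous_fderiv one_ne_zero
    exact (InnerProductSpace.toDual ℝ _).symm.continuous.comp this
  have hcont : Continuous (fun s : ℝ => ⟪gradient h (u + s • d), d⟫) := by
    exact (hgc.comp (continuous_const.add (continuous_id.smul continuous_const))).inner continuous_const
  -- FTC
  have hftc : h uplus - h u = ∫ s in (0:ℝ)..1, ⟪gradient h (u + s • d), d⟫ := by
    rw [intervalIntegral.integral_eq_sub_of_hasDerivAt (fun s _ => hphi s)
      (hcont.intervalIntegrable 0 1)]
    simp [hd]
  -- bound the integrand
  have hbound : ∀ s ∈ Set.Icc (0:ℝ) 1,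
      ⟪gradient h (u + s • d), d⟫ ≤ ⟪gradient h u, d⟫ + L * s * ‖d‖ ^ 2 := by
    intro s hs
    have h1 : ⟪gradient h (u + s • d) - gradient h u, d⟫ ≤ L * s * ‖d‖ ^ 2 := by
      calc ⟪gradient h (u + s • d) - gradient h u, d⟫
          ≤ ‖gradient h (u + s • d) - gradient h u‖ * ‖d‖ := real_inner_le_norm _ _
        _ ≤ (L * ‖(u + s • d) - u‖) * ‖d‖ := by
            gcongr; exact hlip _ (hseg s hs) _ hu
        _ = L * s * ‖d‖ ^ 2 := by
            have : ‖(u + s • d) - u‖ = s * ‖d‖ := by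
              simp [norm_smul, abs_of_nonneg hs.1]
            rw [this]; ring
    have := inner_sub_left (𝕜 := ℝ) (gradient h (u + s • d)) (gradient h u) d
    linarith [h1, this.symm ▸ h1]
  -- integrate the bound
  have hint : (∫ s in (0:ℝ)..1, ⟪gradient h (u + s • d), d⟫)
      ≤ ∫ s in (0:ℝ)..1, (⟪gradient h u, d⟫ + L * s * ‖d‖ ^ 2) := by
    apply intervalIntegral.integral_mono_on (by norm_num)
      (hcont.intervalIntegrable 0 1) (Continuous.intervalIntegrable (by fun_prop) 0 1)
    exact hbound
  have hval : (∫ s in (0:ℝ)..1, (⟪gradient h u, d⟫ + L * s * ‖d‖ ^ 2))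
      = ⟪gradient h u, d⟫ + L / 2 * ‖d‖ ^ 2 := by
    rw [intervalIntegral.integral_add (Continuous.intervalIntegrable (by fun_prop) 0 1)
      (Continuous.intervalIntegrable (by fun_prop) 0 1)]
    have : (∫ s in (0:ℝ)..1, L * s * ‖d‖ ^ 2) = L / 2 * ‖d‖ ^ 2 := by
      have : (fun s : ℝ => L * s * ‖d‖ ^ 2) = fun s : ℝ => (L * ‖d‖ ^ 2) * s := by
        funext s; ring
      rw [this, intervalIntegral.integral_const_mul, integral_id]
      · ring
    simp [this]
  linarith [hftc, hint, hval.symm ▸ hint]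

theorem stmt_3 {n : ℕ} (h : EuclideanSpace ℝ (Fin n) → ℝ)
    (σ : EuclideanSpace ℝ (Fin n) → EReal) (L τ t : ℝ)
    (hL : 0 < L) (hτ : 0 < τ) (hsmooth : ContDiff ℝ 1 h)
    (hlip : ∀ u ∈ Metric.closedBall (0 : EuclideanSpace ℝ (Fin n)) τ,
      ∀ v ∈ Metric.closedBall (0 : EuclideanSpace ℝ (Fin n)) τ,
        ‖gradient h u - gradient h v‖ ≤ L * ‖u - v‖)
    (hσ_ne_bot : ∀ x, σ x ≠ ⊥) (hσ_proper : ∃ x, σ x ≠ ⊤)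
    (hσ_lsc : LowerSemicontinuous σ)
    (hσ_inf : ∃ b : ℝ, ∀ x, (b : EReal) ≤ σ x)
    (ht : L < t)
    (u uplus : EuclideanSpace ℝ (Fin n))
    (hu : u ∈ Metric.closedBall (0 : EuclideanSpace ℝ (Fin n)) τ)
    (huplus : uplus ∈ Metric.closedBall (0 : EuclideanSpace ℝ (Fin n)) τ)
    (hmin : ∀ x, σ uplus + ((⟪gradient h u, uplus - u⟫ + t / 2 * ‖uplus - u‖ ^ 2 : ℝ) : EReal)
      ≤ σ x + ((⟪gradient h u, x - u⟫ + t / 2 * ‖x - u‖ ^ 2 : ℝ) : EReal)) :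
    ((h uplus : ℝ) : EReal) + σ uplus
      ≤ ((h u : ℝ) : EReal) + σ u - (((t - L) / 2 * ‖uplus - u‖ ^ 2 : ℝ) : EReal) := by
  set c : ℝ := ⟪gradient h u, uplus - u⟫ + t / 2 * ‖uplus - u‖ ^ 2 with hc
  have hkey : σ uplus + (c : EReal) ≤ σ u := by
    have := hmin u
    simpa using this
  have hdesc := descent h L τ hsmooth hlip u uplus hu huplus
  by_cases hstop : σ u = ⊤
  · rw [hstop]
    have : ((h u : ℝ) : EReal) + ⊤ - (((t - L) / 2 * ‖uplus - u‖ ^ 2 : ℝ) : EReal) = ⊤ := by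
      rw [EReal.add_top_of_ne_bot (by exact_mod_cast EReal.coe_ne_bot _)]
      rfl
    rw [this]
    exact le_top
  · -- σ u is a real number
    obtain ⟨su, hsu⟩ : ∃ su : ℝ, σ u = (su : EReal) :=
      ⟨(σ u).toReal, (EReal.coe_toReal hstop (hσ_ne_bot u)).symm⟩
    have hptop : σ uplus ≠ ⊤ := by
      intro htop
      rw [htop, hsu] at hkey
      simp [EReal.top_add_of_ne_bot (by exact_mod_cast EReal.coe_ne_bot c : (c:EReal) ≠ ⊥)] at hkey
    obtain ⟨sp, hsp⟩ : ∃ sp : ℝ, σ uplus = (sp : EReal) :=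
      ⟨(σ uplus).toReal, (EReal.coe_toReal hptop (hσ_ne_bot uplus)).symm⟩
    rw [hsu, hsp] at hkey ⊢
    have hkey' : sp + c ≤ su := by exact_mod_cast hkey
    have : ((h u : ℝ) : EReal) + (su : EReal) - (((t - L) / 2 * ‖uplus - u‖ ^ 2 : ℝ) : EReal)
        = ((h u + su - (t - L) / 2 * ‖uplus - u‖ ^ 2 : ℝ) : EReal) := by
      norm_cast
    rw [this, ← EReal.coe_add, EReal.coe_le_coe_iff]
    rw [hc] at hkey'
    nlinarith [hdesc, hkey']
end

section
/- Let (a_k) be a sequence of nonnegative reals and suppose there exist c > 0 and nonnegative reals Δ_k with Σ_k Δ_k < ∞ such that 2 a_{k+1} ≤ a_k + c Δ_k for all k ≥ 1. Then Σ_{k=1}^∞ a_k < ∞. -/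
theorem stmt_12 (a Δ : ℕ → ℝ) (c : ℝ) (hc : 0 < c)
    (ha : ∀ k, 0 ≤ a k) (hΔ : ∀ k, 0 ≤ Δ k) (hΔsum : Summable Δ)
    (hrec : ∀ k ≥ 1, 2 * a (k + 1) ≤ a k + c * Δ k) :
    Summable a := by
  set T := ∑' k, Δ k with hT
  have hT0 : ∀ n, ∑ i ∈ Finset.range n, Δ i ≤ T := fun n =>
    Summable.sum_le_tsum (Finset.range n) (fun i _ => hΔ i) hΔsum
  set C := 2 * a 0 + 2 * a 1 + c * T with hC
  apply summable_of_sum_range_le (c := C) ha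
  intro n
  -- key: bound on S (n+1)
  have key : ∀ n, ∑ i ∈ Finset.range (n + 2), a i ≤ C := by
    intro n
    have hsum : 2 * ∑ i ∈ Finset.Ico 1 (n + 1), a (i + 1)
        ≤ (∑ i ∈ Finset.Ico 1 (n + 1), a i) + c * ∑ i ∈ Finset.Ico 1 (n + 1), Δ i := by
      rw [Finset.mul_sum, Finset.mul_sum, ← Finset.sum_add_distrib]
      exact Finset.sum_le_sum fun i hi => hrec i (Finset.mem_Ico.mp hi).1
    have h1 : ∑ i ∈ Finset.Ico 1 (n + 1), a (i + 1)
        = ∑ i ∈ Finset.Ico 2 (n + 2), a i := by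
      rw [Finset.sum_Ico_eq_sum_range, Finset.sum_Ico_eq_sum_range]
      simp [add_comm]
      apply Finset.sum_congr rfl
      intro i _
      ring_nf
    have h2 : ∑ i ∈ Finset.Ico 2 (n + 2), a i
        = (∑ i ∈ Finset.range (n + 2), a i) - a 0 - a 1 := by
      rw [Finset.range_eq_Ico, ← Finset.sum_Ico_consecutive _ (by omega : 0 ≤ 2) (by omega : 2 ≤ n + 2)]
      have : ∑ i ∈ Finset.Ico 0 2, a i = a 0 + a 1 := by
        simp [Finset.sum_Ico_eq_sum_range, Finset.sum_range_succ]
      rw [this]; ring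
    have h3 : ∑ i ∈ Finset.Ico 1 (n + 1), a i ≤ ∑ i ∈ Finset.range (n + 2), a i := by
      apply Finset.sum_le_sum_of_subset_of_nonneg
      · intro x hx
        simp only [Finset.mem_Ico] at hx
        simp only [Finset.mem_range]; omega
      · intro i _ _; exact ha i
    have h4 : ∑ i ∈ Finset.Ico 1 (n + 1), Δ i ≤ T := by
      refine le_trans ?_ (hT0 (n + 1))
      apply Finset.sum_le_sum_of_subset_of_nonneg
      · intro x hx
        simp only [Finset.mem_Ico] at hx
        simp only [Finset.mem_range]; omega
      · intro i _ _; exact hΔ i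
    rw [h1, h2] at hsum
    have := mul_le_mul_of_nonneg_left h4 hc.le
    nlinarith [ha 0, ha 1]
  match n with
  | 0 =>
    have hcT : 0 ≤ c * T := mul_nonneg hc.le (le_trans (by simp) (hT0 0))
    simp only [Finset.range_zero, Finset.sum_empty]
    nlinarith [ha 0, ha 1]
  | 1 =>
    have hcT : 0 ≤ c * T := mul_nonneg hc.le (le_trans (by simp) (hT0 0))
    simp only [Finset.sum_range_one]
    nlinarith [ha 0, ha 1]
  | (m + 2) => exact key m
end
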